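/- Let p > 10 be prime and 0 < ℓ < p/2. Define coefficients c_t by Q(q^ℓ, q^p)/(q;q)_∞ = ∑_{t≥0} c_t q^t. Then all c_t are nonnegative, and there exists t_0 such that c_t > 0 for all t > t_0. -/

import Mathlib

set_option maxHeartbeats 1000000

open PowerSeries

/-- The q-Pochhammer infinite product `(q^x; q^p)_∞ = ∏_{k≥0} (1 - q^{x+kp})` as a formal
power series (for `x ≥ 1` the coefficient of `q^n` is determined by the first `n+1`
factors, since every further factor is `1 + O(q^{n+1})`). -/
noncomputable def Pq (x p : ℕ) : PowerSeries ℚ :=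
  PowerSeries.mk fun n =>
    PowerSeries.coeff n (∏ k ∈ Finset.range (n + 1), (1 - (PowerSeries.X : PowerSeries ℚ) ^ (x + k * p)))

/-- The quintuple product `Q(q^ℓ, q^p) = (q^ℓ,q^{p-ℓ},q^p;q^p)_∞ (q^{p+2ℓ},q^{p-2ℓ};q^{2p})_∞`
as a formal power series. -/
noncomputable def Qq (ℓ p : ℕ) : PowerSeries ℚ :=
  Pq ℓ p * Pq (p - ℓ) p * Pq p p * Pq (p + 2 * ℓ) (2 * p) * Pq (p - 2 * ℓ) (2 * p)

namespace QuintupleAux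

open Finset

abbrev PS := PowerSeries ℚ

/-! ### geometric series -/

noncomputable def geom (e : ℕ) : PS :=
  PowerSeries.mk fun n => if e ∣ n then 1 else 0

lemma geom_coeff (e n : ℕ) : coeff n (geom e) = if e ∣ n then 1 else 0 :=
  coeff_mk n _

lemma geom_nonneg (e n : ℕ) : 0 ≤ coeff n (geom e) := by
  rw [geom_coeff]; split <;> norm_num

lemma geom_coeff_zero (e : ℕ) : coeff 0 (geom e) = 1 := by
  rw [geom_coeff, if_pos (dvd_zero e)]

lemma one_sub_X_pow_mul_geom (e : ℕ) (he : 0 < e) :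
    ((1 : PS) - X ^ e) * geom e = 1 := by
  ext t
  rw [sub_mul, one_mul, map_sub, coeff_X_pow_mul', geom_coeff, coeff_one]
  rcases Nat.eq_zero_or_pos t with rfl | ht
  · rw [if_pos (dvd_zero e), if_neg (show ¬ e ≤ 0 by omega), if_pos rfl]; ring
  · rw [if_neg (show ¬ t = 0 by omega)]
    rcases Nat.lt_or_ge t e with h | h
    · rw [if_neg (show ¬ e ≤ t by omega),
        if_neg (fun hd : e ∣ t => absurd (Nat.le_of_dvd ht hd) (by omega)), sub_zero]
    · rw [if_pos h, geom_coeff]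
      have hiff : e ∣ t ↔ e ∣ t - e := by
        constructor
        · exact fun hd => Nat.dvd_sub hd dvd_rfl
        · intro hd
          have h2 := Nat.sub_add_cancel h
          rw [← h2]; exact Nat.dvd_add hd dvd_rfl
      by_cases hd : e ∣ t
      · rw [if_pos hd, if_pos (hiff.mp hd), sub_self]
      · rw [if_neg hd, if_neg (fun h2 => hd (hiff.mpr h2)), sub_zero]

/-! ### congruences modulo `X^(n+1)` -/

lemma modd_coeff {n : ℕ} {f g : PS} (h : (X : PS) ^ (n+1) ∣ f - g) {t : ℕ} (ht : t ≤ n) :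
    coeff t f = coeff t g := by
  rw [X_pow_dvd_iff] at h
  have := h t (by omega)
  rw [map_sub, sub_eq_zero] at this
  exact this

lemma modd_mul {n : ℕ} {f g f' g' : PS} (h : (X : PS) ^ n ∣ f - g)
    (h' : (X : PS) ^ n ∣ f' - g') : (X : PS) ^ n ∣ f * f' - g * g' := by
  have : f * f' - g * g' = f * (f' - g') + (f - g) * g' := by ring
  rw [this]
  exact dvd_add (Dvd.dvd.mul_left h' f) (Dvd.dvd.mul_right h g')

lemma modd_prod {ι : Type*} {n : ℕ} (s : Finset ι) (f g : ι → PS)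
    (h : ∀ i ∈ s, (X : PS) ^ n ∣ f i - g i) :
    (X : PS) ^ n ∣ (∏ i ∈ s, f i) - ∏ i ∈ s, g i := by
  classical
  induction s using Finset.cons_induction with
  | empty => simp
  | cons a s ha ih =>
    rw [Finset.prod_cons, Finset.prod_cons]
    exact modd_mul (h a (Finset.mem_cons_self a s))
      (ih fun i hi => h i (Finset.mem_cons_of_mem hi))

lemma modd_one_sub (n e : ℕ) (he : n ≤ e) :
    (X : PS) ^ n ∣ (1 - (X : PS) ^ e) - 1 := by
  have : (1 - (X : PS) ^ e) - 1 = -(X : PS) ^ e := by ring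
  rw [this, dvd_neg]
  exact pow_dvd_pow _ he

lemma coeff_prod_trunc (x p t m : ℕ) (hx : 0 < x) (hp : 0 < p) (hm : t + 1 ≤ m) :
    coeff t (∏ k ∈ range m, ((1 : PS) - X ^ (x + k * p))) =
    coeff t (∏ k ∈ range (t + 1), ((1 : PS) - X ^ (x + k * p))) := by
  have hsplit : m = (t + 1) + (m - (t + 1)) := by omega
  rw [hsplit, Finset.prod_range_add]
  have htail : (X : PS) ^ (t+1) ∣
      (∏ k ∈ range (m - (t+1)), ((1:PS) - X ^ (x + (t + 1 + k) * p))) - 1 := by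
    have := modd_prod (n := t+1) (range (m - (t+1)))
      (fun k => (1:PS) - X ^ (x + (t + 1 + k) * p)) (fun _ => 1)
      (fun k _ => modd_one_sub _ _ (by nlinarith))
    simpa using this
  have := modd_mul (n := t+1) (f := ∏ k ∈ range (t+1), ((1:PS) - X ^ (x + k * p)))
    (g := ∏ k ∈ range (t+1), ((1:PS) - X ^ (x + k * p)))
    (f' := ∏ k ∈ range (m - (t+1)), ((1:PS) - X ^ (x + (t + 1 + k) * p))) (g' := 1)
    (by simp) htail
  rw [mul_one] at this
  exact modd_coeff this (le_refl t)

lemma Pq_modd (x p n m : ℕ) (hx : 0 < x) (hp : 0 < p) (hm : n + 1 ≤ m) :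
    (X : PS) ^ (n + 1) ∣ Pq x p - ∏ k ∈ range m, ((1 : PS) - X ^ (x + k * p)) := by
  rw [X_pow_dvd_iff]
  intro t ht
  rw [map_sub, sub_eq_zero]
  show coeff t (Pq x p) = _
  rw [Pq, coeff_mk, coeff_prod_trunc x p t m hx hp (by omega)]

lemma Pq_constantCoeff (x p : ℕ) (hx : 0 < x) : constantCoeff (Pq x p) = 1 := by
  rw [← coeff_zero_eq_constantCoeff, Pq, coeff_mk]
  rw [Finset.prod_range_one]
  rw [map_sub, coeff_X_pow, if_neg (by omega : ¬ (0:ℕ) = x + 0 * p)]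
  simp

/-! ### product reindexing helpers -/

lemma prod_even_odd (f : ℕ → PS) (N : ℕ) :
    (∏ k ∈ range N, f (2*k)) * (∏ k ∈ range N, f (2*k+1)) = ∏ j ∈ range (2*N), f j := by
  induction N with
  | zero => simp
  | succ n ih =>
    rw [prod_range_succ, prod_range_succ, show 2*(n+1) = 2*n+1+1 by ring,
      prod_range_succ, prod_range_succ, ← ih]
    ring

lemma prod_blocks (g : ℕ → PS) (N q : ℕ) :
    ∏ j ∈ range N, ∏ i ∈ range q, g (j*q + i) = ∏ m ∈ range (N*q), g m := by
  induction N with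
  | zero => simp
  | succ n ih =>
    rw [prod_range_succ, ih, show (n+1)*q = n*q + q by ring, Finset.prod_range_add]

/-! ### the complementary factor `D` -/

def exclS (p l : ℕ) : Finset ℕ := {l, p - l, p, 2*l, p - 2*l}

def AS (p l : ℕ) : Finset ℕ := Finset.Icc 1 p \ exclS p l

noncomputable def Dser (p l : ℕ) : PS :=
  Pq (2*l) (2*p) * Pq (2*p - 2*l) (2*p) * ∏ r ∈ AS p l, Pq r p

lemma mem_AS {p l r : ℕ} : r ∈ AS p l ↔
    (1 ≤ r ∧ r ≤ p) ∧ ¬(r = l ∨ r = p - l ∨ r = p ∨ r = 2*l ∨ r = p - 2*l) := by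
  simp [AS, exclS, Finset.mem_sdiff, Finset.mem_Icc, Finset.mem_insert, Finset.mem_singleton]

/-! ### arithmetic facts -/

lemma three_l_ne (p l : ℕ) (hp : p.Prime) (hp10 : 10 < p) : 3 * l ≠ p := by
  intro h
  have h3 : (3 : ℕ) ∣ p := ⟨l, h.symm⟩
  rcases (Nat.Prime.eq_one_or_self_of_dvd hp 3 h3) with h' | h' <;> omega

lemma four_l_ne (p l : ℕ) (hp : p.Prime) (hp10 : 10 < p) : 4 * l ≠ p := by
  intro h
  have h2 : (2 : ℕ) ∣ p := ⟨2*l, by omega⟩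
  rcases (Nat.Prime.eq_one_or_self_of_dvd hp 2 h2) with h' | h' <;> omega

/-! ### the key identity `Qq ℓ p * Dser p ℓ = Pq 1 1` -/

lemma key_identity (p l : ℕ) (hp : p.Prime) (hp10 : 10 < p)
    (hl0 : 0 < l) (hl : 2*l < p) : Qq l p * Dser p l = Pq 1 1 := by
  have hp0 : 0 < p := by omega
  have h3 := three_l_ne p l hp hp10
  have h4 := four_l_ne p l hp hp10
  ext n
  set M : ℕ := n + 1 with hMdef
  -- the residue-wise truncated product
  set F : ℕ → PS := fun r => ∏ k ∈ range (2*M), ((1:PS) - X ^ (r + k * p)) with hF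
  -- truncations of the individual Pq factors
  have hT1 : (X:PS)^(n+1) ∣ Pq l p - F l := Pq_modd l p n (2*M) hl0 hp0 (by omega)
  have hT2 : (X:PS)^(n+1) ∣ Pq (p-l) p - F (p-l) := Pq_modd _ p n (2*M) (by omega) hp0 (by omega)
  have hT3 : (X:PS)^(n+1) ∣ Pq p p - F p := Pq_modd p p n (2*M) hp0 hp0 (by omega)
  have hT4 : (X:PS)^(n+1) ∣ Pq (p+2*l) (2*p) - ∏ k ∈ range M, ((1:PS) - X ^ ((p+2*l) + k * (2*p))) :=
    Pq_modd _ (2*p) n M (by omega) (by omega) (by omega)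
  have hT5 : (X:PS)^(n+1) ∣ Pq (p-2*l) (2*p) - ∏ k ∈ range M, ((1:PS) - X ^ ((p-2*l) + k * (2*p))) :=
    Pq_modd _ (2*p) n M (by omega) (by omega) (by omega)
  have hT6 : (X:PS)^(n+1) ∣ Pq (2*l) (2*p) - ∏ k ∈ range M, ((1:PS) - X ^ (2*l + k * (2*p))) :=
    Pq_modd _ (2*p) n M (by omega) (by omega) (by omega)
  have hT7 : (X:PS)^(n+1) ∣ Pq (2*p-2*l) (2*p) - ∏ k ∈ range M, ((1:PS) - X ^ ((2*p-2*l) + k * (2*p))) :=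
    Pq_modd _ (2*p) n M (by omega) (by omega) (by omega)
  have hT8 : (X:PS)^(n+1) ∣ (∏ r ∈ AS p l, Pq r p) - ∏ r ∈ AS p l, F r := by
    refine modd_prod _ _ _ (fun r hr => ?_)
    have h1 : 1 ≤ r := (mem_AS.mp hr).1.1
    exact Pq_modd r p n (2*M) (by omega) hp0 (by omega)
  -- the truncated LHS
  have hmain : (X:PS)^(n+1) ∣ Qq l p * Dser p l -
      ((F l * F (p-l) * F p *
        (∏ k ∈ range M, ((1:PS) - X ^ ((p+2*l) + k * (2*p)))) *
        (∏ k ∈ range M, ((1:PS) - X ^ ((p-2*l) + k * (2*p))))) *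
       ((∏ k ∈ range M, ((1:PS) - X ^ (2*l + k * (2*p)))) *
        (∏ k ∈ range M, ((1:PS) - X ^ ((2*p-2*l) + k * (2*p)))) *
        ∏ r ∈ AS p l, F r)) := by
    unfold Qq Dser
    exact modd_mul (modd_mul (modd_mul (modd_mul (modd_mul hT1 hT2) hT3) hT4) hT5)
      (modd_mul (modd_mul hT6 hT7) hT8)
  -- merge the even/odd pieces
  have hmerge1 : (∏ k ∈ range M, ((1:PS) - X ^ (2*l + k * (2*p)))) *
      (∏ k ∈ range M, ((1:PS) - X ^ ((p+2*l) + k * (2*p)))) = F (2*l) := by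
    simp only [hF]
    have := prod_even_odd (fun j => (1:PS) - X ^ (2*l + j * p)) M
    rw [← this]
    congr 1
    · exact Finset.prod_congr rfl fun k _ => by rw [show 2*l + 2*k*p = 2*l + k*(2*p) by ring]
    · exact Finset.prod_congr rfl fun k _ => by
        rw [show 2*l + (2*k+1)*p = (p + 2*l) + k*(2*p) by ring]
  have hmerge2 : (∏ k ∈ range M, ((1:PS) - X ^ ((p-2*l) + k * (2*p)))) *
      (∏ k ∈ range M, ((1:PS) - X ^ ((2*p-2*l) + k * (2*p)))) = F (p-2*l) := by
    simp only [hF]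
    have := prod_even_odd (fun j => (1:PS) - X ^ ((p - 2*l) + j * p)) M
    rw [← this]
    congr 1
    · exact Finset.prod_congr rfl fun k _ => by rw [show (p-2*l) + 2*k*p = (p-2*l) + k*(2*p) by ring]
    · exact Finset.prod_congr rfl fun k _ => by
        rw [show (p-2*l) + (2*k+1)*p = ((p-2*l) + p) + k*(2*p) by ring,
          show (p-2*l) + p = 2*p - 2*l by omega]
  -- the five excluded residues
  have hexcl : ∏ r ∈ exclS p l, F r = F l * F (p-l) * F p * F (2*l) * F (p-2*l) := by
    rw [exclS]
    rw [Finset.prod_insert (by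
          simp only [Finset.mem_insert, Finset.mem_singleton]; push_neg
          refine ⟨by omega, by omega, by omega, by omega⟩),
        Finset.prod_insert (by
          simp only [Finset.mem_insert, Finset.mem_singleton]; push_neg
          refine ⟨by omega, by omega, by omega⟩),
        Finset.prod_insert (by
          simp only [Finset.mem_insert, Finset.mem_singleton]; push_neg
          refine ⟨by omega, by omega⟩),
        Finset.prod_insert (by
          simp only [Finset.mem_singleton]; omega),
        Finset.prod_singleton]
    ring
  -- assembling all residues
  have hsub : exclS p l ⊆ Finset.Icc 1 p := by
    intro r hr
    simp only [exclS, Finset.mem_insert, Finset.mem_singleton] at hr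
    rw [Finset.mem_Icc]
    rcases hr with rfl | rfl | rfl | rfl | rfl <;> omega
  have hall : (∏ r ∈ AS p l, F r) * ∏ r ∈ exclS p l, F r = ∏ r ∈ Finset.Icc 1 p, F r := by
    rw [AS]
    exact Finset.prod_sdiff hsub
  -- the full product over Icc 1 p is the truncation of Pq 1 1
  have hrange : ∏ r ∈ Finset.Icc 1 p, F r = ∏ m ∈ range (2*M*p), ((1:PS) - X ^ (1 + m * 1)) := by
    rw [← Finset.Ico_add_one_right_eq_Icc, Finset.prod_Ico_eq_prod_range]
    simp only [hF]
    rw [Finset.prod_comm]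
    have := prod_blocks (fun m => (1:PS) - X ^ (1 + m)) (2*M) p
    calc ∏ k ∈ range (2*M), ∏ i ∈ range p, ((1:PS) - X ^ ((1 + i) + k * p))
        = ∏ k ∈ range (2*M), ∏ i ∈ range p, ((1:PS) - X ^ (1 + (k * p + i))) := by
          refine Finset.prod_congr rfl fun k _ => Finset.prod_congr rfl fun i _ => by
            rw [show (1 + i) + k * p = 1 + (k * p + i) by ring]
      _ = ∏ m ∈ range (2*M*p), ((1:PS) - X ^ (1 + m)) := this
      _ = ∏ m ∈ range (2*M*p), ((1:PS) - X ^ (1 + m * 1)) := by simp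
  have hP11 : (X:PS)^(n+1) ∣ Pq 1 1 - ∏ m ∈ range (2*M*p), ((1:PS) - X ^ (1 + m * 1)) :=
    Pq_modd 1 1 n (2*M*p) (by omega) (by omega) (by nlinarith)
  -- conclude
  have hEq : (F l * F (p-l) * F p *
        (∏ k ∈ range M, ((1:PS) - X ^ ((p+2*l) + k * (2*p)))) *
        (∏ k ∈ range M, ((1:PS) - X ^ ((p-2*l) + k * (2*p))))) *
       ((∏ k ∈ range M, ((1:PS) - X ^ (2*l + k * (2*p)))) *
        (∏ k ∈ range M, ((1:PS) - X ^ ((2*p-2*l) + k * (2*p)))) *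
        ∏ r ∈ AS p l, F r) = ∏ m ∈ range (2*M*p), ((1:PS) - X ^ (1 + m * 1)) := by
    rw [← hrange, ← hall, hexcl, ← hmerge1, ← hmerge2]
    ring
  calc coeff n (Qq l p * Dser p l) = _ := modd_coeff hmain (le_refl n)
    _ = coeff n (∏ m ∈ range (2*M*p), ((1:PS) - X ^ (1 + m * 1))) := by rw [hEq]
    _ = coeff n (Pq 1 1) := (modd_coeff hP11 (le_refl n)).symm

/-! ### nonnegative coefficients -/

def NNc (f : PS) : Prop := ∀ m, 0 ≤ coeff m f

lemma NNc_mul {f g : PS} (hf : NNc f) (hg : NNc g) : NNc (f * g) := by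
  intro m
  rw [coeff_mul]
  exact Finset.sum_nonneg fun x _ => mul_nonneg (hf x.1) (hg x.2)

lemma NNc_geom (e : ℕ) : NNc (geom e) := fun m => geom_nonneg e m

lemma NNc_one : NNc 1 := fun m => by
  rw [coeff_one]; split <;> norm_num

lemma NNc_prod {ι : Type*} (s : Finset ι) (f : ι → PS) (h : ∀ i ∈ s, NNc (f i)) :
    NNc (∏ i ∈ s, f i) := by
  classical
  induction s using Finset.cons_induction with
  | empty => simpa using NNc_one
  | cons a s ha ih =>
    rw [Finset.prod_cons]
    exact NNc_mul (h a (Finset.mem_cons_self a s)) (ih fun i hi => h i (Finset.mem_cons_of_mem hi))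

lemma coeff_mul_ge {f g : PS} (hf : NNc f) (hg : NNc g) (t : ℕ) :
    coeff t f * coeff 0 g ≤ coeff t (f * g) := by
  rw [coeff_mul]
  exact Finset.single_le_sum (f := fun x : ℕ × ℕ => coeff x.1 f * coeff x.2 g) (a := (t, 0))
    (fun x _ => mul_nonneg (hf x.1) (hg x.2))
    (Finset.HasAntidiagonal.mem_antidiagonal.mpr (add_zero t))

lemma decomp (a t : ℕ) (ha : 0 < a) (ht : a * a ≤ t) :
    ∃ u v, u + v = t ∧ a ∣ u ∧ (a+1) ∣ v := by
  have hr : t % a < a := Nat.mod_lt _ ha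
  have hq : a ≤ t / a := by
    rw [Nat.le_div_iff_mul_le ha]; exact ht
  have h2 : t % a ≤ t / a := by omega
  refine ⟨a * (t / a - t % a), (a+1) * (t % a), ?_, ⟨_, rfl⟩, ⟨_, rfl⟩⟩
  have key : a * (t / a - t % a) + (a+1) * (t % a) = a * ((t / a - t % a) + t % a) + t % a := by
    ring
  rw [key, Nat.sub_add_cancel h2]
  exact Nat.div_add_mod t a

lemma coeff_geom_pair_pos (a t : ℕ) (ha : 0 < a) (ht : a * a ≤ t) :
    (1:ℚ) ≤ coeff t (geom a * geom (a+1)) := by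
  obtain ⟨u, v, huv, hu, hv⟩ := decomp a t ha ht
  rw [coeff_mul]
  have h1 : (1:ℚ) = coeff u (geom a) * coeff v (geom (a+1)) := by
    rw [geom_coeff, geom_coeff, if_pos hu, if_pos hv]; norm_num
  rw [h1]
  exact Finset.single_le_sum (f := fun x : ℕ × ℕ => coeff x.1 (geom a) * coeff x.2 (geom (a+1)))
    (a := (u, v)) (fun x _ => mul_nonneg (geom_nonneg _ _) (geom_nonneg _ _))
    (Finset.HasAntidiagonal.mem_antidiagonal.mpr huv)

lemma coeff_inv_transfer {n t : ℕ} (ht : t ≤ n) {f g G : PS}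
    (hf : constantCoeff f ≠ 0) (hgG : g * G = 1) (h : (X:PS)^(n+1) ∣ f - g) :
    coeff t f⁻¹ = coeff t G := by
  have hfinv := PowerSeries.mul_inv_cancel f hf
  have h2 : f⁻¹ - G = f⁻¹ * G * (g - f) := by
    calc f⁻¹ - G = f⁻¹ * (g * G) - (f * f⁻¹) * G := by rw [hgG, hfinv]; ring
    _ = f⁻¹ * G * (g - f) := by ring
  have hdvd : (X:PS)^(n+1) ∣ f⁻¹ - G := by
    rw [h2]
    exact Dvd.dvd.mul_left ((dvd_sub_comm).mp h) _
  exact modd_coeff hdvd ht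

lemma geom_constantCoeff (e : ℕ) : constantCoeff (geom e) = 1 := by
  rw [← coeff_zero_eq_constantCoeff]; exact geom_coeff_zero e

lemma Dser_constantCoeff (p l : ℕ) (hl0 : 0 < l) (hl : 2*l < p) :
    constantCoeff (Dser p l) = 1 := by
  rw [Dser, map_mul, map_mul, map_prod]
  rw [Pq_constantCoeff _ _ (by omega), Pq_constantCoeff _ _ (by omega)]
  rw [Finset.prod_congr rfl (fun r hr => Pq_constantCoeff r p (mem_AS.mp hr).1.1)]
  simp

/-! ### coefficient bounds for `(Dser p l)⁻¹` -/

lemma Dinv_coeff_bounds (p l : ℕ) (hp0 : 0 < p) (hl0 : 0 < l) (hl : 2*l < p)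
    (a : ℕ) (ha : a ∈ AS p l) (ha1 : a + 1 ∈ AS p l) (t : ℕ) :
    0 ≤ coeff t (Dser p l)⁻¹ ∧ (a * a ≤ t → 0 < coeff t (Dser p l)⁻¹) := by
  classical
  set M : ℕ := t + 1 with hM
  have hx1 : 0 < 2*l := by omega
  have hx2 : 0 < 2*p - 2*l := by omega
  set E : PS := (∏ k ∈ range M, ((1:PS) - X ^ (2*l + k*(2*p)))) *
      (∏ k ∈ range M, ((1:PS) - X ^ ((2*p-2*l) + k*(2*p)))) *
      ∏ r ∈ AS p l, ∏ k ∈ range M, ((1:PS) - X ^ (r + k*p)) with hE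
  set G : PS := (∏ k ∈ range M, geom (2*l + k*(2*p))) *
      (∏ k ∈ range M, geom ((2*p-2*l) + k*(2*p))) *
      ∏ r ∈ AS p l, ∏ k ∈ range M, geom (r + k*p) with hG
  have hDE : (X:PS)^(t+1) ∣ Dser p l - E := by
    rw [Dser, hE]
    exact modd_mul (modd_mul (Pq_modd _ _ t M hx1 (by omega) le_rfl)
      (Pq_modd _ _ t M hx2 (by omega) le_rfl))
      (modd_prod _ _ _ fun r hr =>
        Pq_modd r p t M (by have := (mem_AS.mp hr).1.1; omega) hp0 le_rfl)
  have hEG : E * G = 1 := by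
    have e1 : (∏ k ∈ range M, ((1:PS) - X ^ (2*l + k*(2*p)))) *
        (∏ k ∈ range M, geom (2*l + k*(2*p))) = 1 := by
      rw [← Finset.prod_mul_distrib]
      exact Finset.prod_eq_one fun k _ =>
        one_sub_X_pow_mul_geom _ (lt_of_lt_of_le hx1 (Nat.le_add_right _ _))
    have e2 : (∏ k ∈ range M, ((1:PS) - X ^ ((2*p-2*l) + k*(2*p)))) *
        (∏ k ∈ range M, geom ((2*p-2*l) + k*(2*p))) = 1 := by
      rw [← Finset.prod_mul_distrib]
      exact Finset.prod_eq_one fun k _ =>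
        one_sub_X_pow_mul_geom _ (lt_of_lt_of_le hx2 (Nat.le_add_right _ _))
    have e3 : (∏ r ∈ AS p l, ∏ k ∈ range M, ((1:PS) - X ^ (r + k*p))) *
        (∏ r ∈ AS p l, ∏ k ∈ range M, geom (r + k*p)) = 1 := by
      rw [← Finset.prod_mul_distrib]
      refine Finset.prod_eq_one fun r hr => ?_
      rw [← Finset.prod_mul_distrib]
      exact Finset.prod_eq_one fun k _ =>
        one_sub_X_pow_mul_geom _
          (lt_of_lt_of_le (mem_AS.mp hr).1.1 (Nat.le_add_right _ _))
    calc E * G = ((∏ k ∈ range M, ((1:PS) - X ^ (2*l + k*(2*p)))) *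
          (∏ k ∈ range M, geom (2*l + k*(2*p)))) *
        ((∏ k ∈ range M, ((1:PS) - X ^ ((2*p-2*l) + k*(2*p)))) *
          (∏ k ∈ range M, geom ((2*p-2*l) + k*(2*p)))) *
        ((∏ r ∈ AS p l, ∏ k ∈ range M, ((1:PS) - X ^ (r + k*p))) *
          (∏ r ∈ AS p l, ∏ k ∈ range M, geom (r + k*p))) := by rw [hE, hG]; ring
      _ = 1 := by rw [e1, e2, e3]; ring
  have hcoeff : ∀ s ≤ t, coeff s (Dser p l)⁻¹ = coeff s G := fun s hs =>
    coeff_inv_transfer hs (by rw [Dser_constantCoeff p l hl0 hl]; norm_num) hEG hDE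
  -- nonnegativity
  have hNNG : NNc G := by
    rw [hG]
    exact NNc_mul (NNc_mul (NNc_prod _ _ fun k _ => NNc_geom _)
      (NNc_prod _ _ fun k _ => NNc_geom _))
      (NNc_prod _ _ fun r _ => NNc_prod _ _ fun k _ => NNc_geom _)
  refine ⟨by rw [hcoeff t le_rfl]; exact hNNG t, fun hat => ?_⟩
  -- positivity: extract geom a * geom (a+1)
  have ha0 : 0 < a := (mem_AS.mp ha).1.1
  set H : ℕ → PS := fun r => ∏ k ∈ range M, geom (r + k*p) with hH
  have hsplit1 : (∏ r ∈ AS p l, H r) = H a * ∏ r ∈ (AS p l).erase a, H r :=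
    (Finset.mul_prod_erase _ _ ha).symm
  have ha1' : a + 1 ∈ (AS p l).erase a := Finset.mem_erase.mpr ⟨by omega, ha1⟩
  have hsplit2 : (∏ r ∈ (AS p l).erase a, H r) =
      H (a+1) * ∏ r ∈ ((AS p l).erase a).erase (a+1), H r :=
    (Finset.mul_prod_erase _ _ ha1').symm
  have hHa : H a = geom a * ∏ k ∈ range t, geom (a + (k+1)*p) := by
    rw [hH]
    show (∏ k ∈ range (t+1), geom (a + k*p)) = _
    rw [Finset.prod_range_succ']
    simp [mul_comm]
  have hHa1 : H (a+1) = geom (a+1) * ∏ k ∈ range t, geom ((a+1) + (k+1)*p) := by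
    rw [hH]
    show (∏ k ∈ range (t+1), geom ((a+1) + k*p)) = _
    rw [Finset.prod_range_succ']
    simp [mul_comm]
  set Rest : PS := (∏ k ∈ range M, geom (2*l + k*(2*p))) *
      (∏ k ∈ range M, geom ((2*p-2*l) + k*(2*p))) *
      ((∏ k ∈ range t, geom (a + (k+1)*p)) *
       ((∏ k ∈ range t, geom ((a+1) + (k+1)*p)) *
        ∏ r ∈ ((AS p l).erase a).erase (a+1), H r)) with hRest
  have hGfact : G = (geom a * geom (a+1)) * Rest := by
    rw [hG, hRest, hsplit1, hsplit2, hHa, hHa1]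
    ring
  have hNNRest : NNc Rest := by
    rw [hRest]
    refine NNc_mul (NNc_mul (NNc_prod _ _ fun k _ => NNc_geom _)
      (NNc_prod _ _ fun k _ => NNc_geom _)) ?_
    refine NNc_mul (NNc_prod _ _ fun k _ => NNc_geom _) ?_
    refine NNc_mul (NNc_prod _ _ fun k _ => NNc_geom _) ?_
    exact NNc_prod _ _ fun r _ => NNc_prod _ _ fun k _ => NNc_geom _
  have hRest0 : coeff 0 Rest = 1 := by
    rw [coeff_zero_eq_constantCoeff, hRest, hH]
    simp [map_prod, geom_constantCoeff]
  have hpair : NNc (geom a * geom (a+1)) := NNc_mul (NNc_geom _) (NNc_geom _)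
  have hge : coeff t ((geom a * geom (a+1)) * Rest) ≥
      coeff t (geom a * geom (a+1)) * coeff 0 Rest :=
    coeff_mul_ge hpair hNNRest t
  have h1le : (1:ℚ) ≤ coeff t (geom a * geom (a+1)) := coeff_geom_pair_pos a t ha0 hat
  rw [hcoeff t le_rfl, hGfact]
  rw [hRest0] at hge
  linarith

/-! ### a pair of consecutive allowed residues -/

lemma exists_consec (p l : ℕ) (hp : p.Prime) (hp10 : 10 < p) (hl0 : 0 < l) (hl : 2*l < p) :
    ∃ a, a ∈ AS p l ∧ a + 1 ∈ AS p l := by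
  classical
  have hodd : p % 2 = 1 := Nat.odd_iff.mp (hp.odd_of_ne_two (by omega))
  set c : ℕ := (p - 1) / 2 with hcdef
  have hc : p = 2*c + 1 := by omega
  by_contra hcon
  push_neg at hcon
  set S : Finset ℕ := {l, p - l, 2*l, p - 2*l} with hS
  have hS4 : S.card ≤ 4 := by
    refine le_trans (Finset.card_insert_le _ _) ?_
    refine Nat.succ_le_succ (le_trans (Finset.card_insert_le _ _) ?_)
    refine Nat.succ_le_succ (le_trans (Finset.card_insert_le _ _) ?_)
    exact Nat.succ_le_succ (le_of_eq (Finset.card_singleton _))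
  have key : ∀ i ∈ range c, (2*i+1 ∈ S ∨ 2*i+2 ∈ S) := by
    intro i hi
    rw [mem_range] at hi
    by_contra hnot
    push_neg at hnot
    have h1 : ¬(2*i+1 = l ∨ 2*i+1 = p - l ∨ 2*i+1 = 2*l ∨ 2*i+1 = p - 2*l) := by
      simpa [hS, Finset.mem_insert, Finset.mem_singleton] using hnot.1
    have h2 : ¬(2*i+2 = l ∨ 2*i+2 = p - l ∨ 2*i+2 = 2*l ∨ 2*i+2 = p - 2*l) := by
      simpa [hS, Finset.mem_insert, Finset.mem_singleton] using hnot.2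
    have hm1 : 2*i+1 ∈ AS p l := by
      rw [mem_AS]
      exact ⟨⟨by omega, by omega⟩, by omega⟩
    have hm2 : 2*i+2 ∈ AS p l := by
      rw [mem_AS]
      exact ⟨⟨by omega, by omega⟩, by omega⟩
    exact (hcon _ hm1) (by rw [show 2*i+1+1 = 2*i+2 by ring]; exact hm2)
  set f : ℕ → ℕ := fun i => if 2*i+1 ∈ S then 2*i+1 else 2*i+2 with hf
  have hmaps : ∀ i ∈ range c, f i ∈ S := by
    intro i hi
    by_cases h : 2*i+1 ∈ S
    · simp [hf, h]
    · simp only [hf, if_neg h]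
      exact (key i hi).resolve_left h
  have hinj : Set.InjOn f (range c) := by
    intro i _ j _ hij
    simp only [hf] at hij
    split_ifs at hij <;> omega
  have hcard := Finset.card_le_card_of_injOn f hmaps hinj
  rw [Finset.card_range] at hcard
  omega

end QuintupleAux

open QuintupleAux in
/-- for prime `p > 10` and `0 < ℓ < p/2`, the coefficients `c_t` of
`Q(q^ℓ,q^p)/(q;q)_∞` are all nonnegative and eventually positive. -/
theorem quintuple_quotient_eventually_positive (p ℓ : ℕ) (hp : p.Prime) (hp10 : 10 < p)
    (hℓ0 : 0 < ℓ) (hℓ : 2 * ℓ < p) :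
    (∀ t : ℕ, 0 ≤ PowerSeries.coeff t (Qq ℓ p * (Pq 1 1)⁻¹)) ∧
      ∃ t₀ : ℕ, ∀ t > t₀, 0 < PowerSeries.coeff t (Qq ℓ p * (Pq 1 1)⁻¹) := by
  have hp0 : 0 < p := by omega
  have hkey := key_identity p ℓ hp hp10 hℓ0 hℓ
  have hD1 : constantCoeff (Dser p ℓ) ≠ 0 := by
    rw [Dser_constantCoeff p ℓ hℓ0 hℓ]; norm_num
  have hP1 : constantCoeff (Pq 1 1) ≠ 0 := by
    rw [Pq_constantCoeff 1 1 one_pos]; norm_num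
  have hDinv := PowerSeries.mul_inv_cancel (Dser p ℓ) hD1
  have hPinv := PowerSeries.mul_inv_cancel (Pq 1 1) hP1
  have hQinv : Qq ℓ p * (Pq 1 1)⁻¹ = (Dser p ℓ)⁻¹ := by
    calc Qq ℓ p * (Pq 1 1)⁻¹
        = (Qq ℓ p * (Dser p ℓ * (Dser p ℓ)⁻¹)) * (Pq 1 1)⁻¹ := by rw [hDinv, mul_one]
      _ = ((Qq ℓ p * Dser p ℓ) * (Pq 1 1)⁻¹) * (Dser p ℓ)⁻¹ := by ring
      _ = ((Pq 1 1) * (Pq 1 1)⁻¹) * (Dser p ℓ)⁻¹ := by rw [hkey]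
      _ = (Dser p ℓ)⁻¹ := by rw [hPinv, one_mul]
  obtain ⟨a, ha, ha1⟩ := exists_consec p ℓ hp hp10 hℓ0 hℓ
  constructor
  · intro t
    rw [hQinv]
    exact (Dinv_coeff_bounds p ℓ hp0 hℓ0 hℓ a ha ha1 t).1
  · refine ⟨a * a, fun t ht => ?_⟩
    rw [hQinv]
    exact (Dinv_coeff_bounds p ℓ hp0 hℓ0 hℓ a ha ha1 t).2 (by omega)
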